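/- Let p ∈ (0,∞] (with 𝕜 = ℝ or ℂ) and let E be a 𝕜-subspace of ℓ_p such that every element of E has infinitely many zero coordinates. If x₁, x₂ ∈ E are linearly independent, then the set {n ∈ ℕ : x₁(n) = 0 and x₂(n) = 0} is infinite. -/
import Mathlib


open Filter
open scoped ENNReal

/-- Membership in `ℓ_p` for `p ∈ (0,∞]`: for `p = ∞` boundedness, for
`p < ∞` summability of `‖x n‖^p`. -/
def InLp {𝕜 : Type} [RCLike 𝕜] (p : ℝ≥0∞) (x : ℕ → 𝕜) : Prop :=
  if p = ⊤ then ∃ C : ℝ, ∀ n, ‖x n‖ ≤ C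
  else Summable (fun n => ‖x n‖ ^ p.toReal)

/-- Let `p ∈ (0,∞]` and let `E` be a subspace of `ℓ_p` every
element of which has infinitely many zero coordinates.  If `x₁, x₂ ∈ E` are
linearly independent, then `{n | x₁ n = 0 ∧ x₂ n = 0}` is infinite. -/
theorem stmt8 {𝕜 : Type} [RCLike 𝕜] (p : ℝ≥0∞) (hp : 0 < p)
    (E : Submodule 𝕜 (ℕ → 𝕜))
    (hEp : (↑E : Set (ℕ → 𝕜)) ⊆ {x | InLp p x})
    (hEz : ∀ x ∈ E, {n : ℕ | x n = 0}.Infinite)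
    (x₁ x₂ : ℕ → 𝕜) (hx₁ : x₁ ∈ E) (hx₂ : x₂ ∈ E)
    (hind : LinearIndependent 𝕜 ![x₁, x₂]) :
    {n : ℕ | x₁ n = 0 ∧ x₂ n = 0}.Infinite := by
  by_contra h
  rw [Set.not_infinite] at h
  have key : ∀ c : 𝕜, ∃ n, x₁ n ≠ 0 ∧ x₂ n = c * x₁ n := by
    intro c
    have hm : x₂ - c • x₁ ∈ E := E.sub_mem hx₂ (E.smul_mem c hx₁)
    have hz : ({n : ℕ | (x₂ - c • x₁) n = 0} \
        {n : ℕ | x₁ n = 0 ∧ x₂ n = 0}).Infinite := (hEz _ hm).diff h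
    obtain ⟨n, hn1, hn2⟩ := hz.nonempty
    simp only [Set.mem_setOf_eq, Pi.sub_apply, Pi.smul_apply, smul_eq_mul,
      sub_eq_zero] at hn1
    refine ⟨n, fun h0 => ?_, hn1⟩
    exact hn2 ⟨h0, by rw [hn1, h0, mul_zero]⟩
  choose f hf1 hf2 using key
  have hinj : Function.Injective f := by
    intro a b hab
    have ha := hf2 a
    rw [hab, hf2 b] at ha
    exact (mul_right_cancel₀ (hf1 b) ha.symm)
  have hcount : Countable 𝕜 := hinj.countable
  have hunc : Uncountable 𝕜 := (algebraMap ℝ 𝕜).injective.uncountable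
  exact (not_countable (α := 𝕜)) hcount
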